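/- Let f : [n] → {0,1} be a function on the line and let S(f) be the sorted (monotone nondecreasing) function on [n] with the same number of ones as f. Then the Hamming distance between f and S(f) is at most twice the distance from f to the nearest monotone function, i.e., |{x : f(x) ≠ S(f)(x)}| ≤ 2·min over monotone g of |{x : f(x) ≠ g(x)}|. -/
import Mathlib


/-- For `f : [n] → {0,1}` and its sorted (monotone) version `Sf` with the same number of
ones, the Hamming distance between `f` and `Sf` is at most twice the distance from `f`
to any monotone function. -/
theorem stmt_1 (n : ℕ) (f Sf : Fin n → Bool)
    (hSmono : Monotone Sf)
    (hones : (Finset.univ.filter fun x => Sf x = true).card =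
      (Finset.univ.filter fun x => f x = true).card)
    (g : Fin n → Bool) (hg : Monotone g) :
    (Finset.univ.filter fun x => f x ≠ Sf x).card ≤
      2 * (Finset.univ.filter fun x => f x ≠ g x).card := by
  classical
  set A := Finset.univ.filter (fun x => f x = true ∧ Sf x = false) with hA
  set B := Finset.univ.filter (fun x => f x = false ∧ Sf x = true) with hB
  have hAB : A.card = B.card := by
    have h1 : ((Finset.univ.filter fun x => f x = true).filter
          (fun x => Sf x = true)).card +
        ((Finset.univ.filter fun x => f x = true).filter
          (fun x => ¬ Sf x = true)).card =
        (Finset.univ.filter fun x => f x = true).card :=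
      Finset.card_filter_add_card_filter_not _
    have h2 : ((Finset.univ.filter fun x => Sf x = true).filter
          (fun x => f x = true)).card +
        ((Finset.univ.filter fun x => Sf x = true).filter
          (fun x => ¬ f x = true)).card =
        (Finset.univ.filter fun x => Sf x = true).card :=
      Finset.card_filter_add_card_filter_not _
    have e1 : ((Finset.univ.filter fun x => f x = true).filter
          (fun x => ¬ Sf x = true)) = A := by
      rw [hA, Finset.filter_filter]
      congr 1
      ext x
      simp [Bool.not_eq_true]
    have e2 : ((Finset.univ.filter fun x => Sf x = true).filter
          (fun x => ¬ f x = true)) = B := by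
      rw [hB, Finset.filter_filter]
      congr 1
      ext x
      simp [Bool.not_eq_true, and_comm]
    have e3 : ((Finset.univ.filter fun x => f x = true).filter
          (fun x => Sf x = true)) =
        ((Finset.univ.filter fun x => Sf x = true).filter
          (fun x => f x = true)) := by
      rw [Finset.filter_filter, Finset.filter_filter]
      congr 1
      ext x
      simp [and_comm]
    rw [e1] at h1
    rw [e2, ← e3] at h2
    omega
  have hsplit : (Finset.univ.filter fun x => f x ≠ Sf x) = A ∪ B := by
    ext x
    simp only [hA, hB, Finset.mem_union, Finset.mem_filter, Finset.mem_univ, true_and]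
    cases h1 : f x <;> cases h2 : Sf x <;> simp
  have hdisj : Disjoint A B := by
    rw [hA, hB, Finset.disjoint_filter]
    intro x _ hx hx'
    simp [hx.1] at hx'
  have hcard : (Finset.univ.filter fun x => f x ≠ Sf x).card = 2 * A.card := by
    rw [hsplit, Finset.card_union_of_disjoint hdisj, hAB]
    omega
  rw [hcard]
  have key : A.card ≤ (Finset.univ.filter fun x => f x ≠ g x).card := by
    by_cases h : ∀ a ∈ A, g a = false
    · apply Finset.card_le_card
      intro x hx
      have hx' := Finset.mem_filter.mp hx
      have := h x hx
      simp only [Finset.mem_filter, Finset.mem_univ, true_and]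
      rw [hx'.2.1, this]
      simp
    · push_neg at h
      obtain ⟨a, haA, hga⟩ := h
      have hga' : g a = true := by
        cases h : g a
        · exact absurd h hga
        · rfl
      have haA' := (Finset.mem_filter.mp haA).2
      rw [hAB]
      apply Finset.card_le_card
      intro b hb
      have hb' := (Finset.mem_filter.mp hb).2
      have hab : a ≤ b := by
        by_contra hlt
        push_neg at hlt
        have := hSmono hlt.le
        rw [hb'.2, haA'.2] at this
        exact absurd this (by simp)
      have hgb : g b = true := by
        have := hg hab
        rw [hga'] at this
        exact Bool.eq_true_of_true_le this
      simp only [Finset.mem_filter, Finset.mem_univ, true_and]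
      rw [hb'.1, hgb]
      simp
  omega
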